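/- Let A, B, Y ∈ ℚ[x,x⁻¹][[t]] with ord_t B > 0 and ord_t Y > 0. Then there exists at most one formal power series U ∈ ℚ[[x,t]] satisfying U(t,x) = A(t,x) + B(t,x)·U(t, Y(t,x)). -/

import Mathlib

noncomputable section

/-- The composition `U(t, Y(t,x))`, obtained by substituting the series
`Y ∈ ℚ[x,x⁻¹][[t]]` for the variable `x` in the formal power series
`U ∈ ℚ[[x,t]]`.  Here variable `0` of `U` is `x` and variable `1` is `t`, and
`ℚ[x,x⁻¹][[t]]` is modelled as `PowerSeries (LaurentPolynomial ℚ)`.  Whenever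
`Y` has positive `t`-adic valuation, only finitely many terms of `U` contribute
to each power of `t`, and the formula below (in which the inner sums are then
actually finite sums over all relevant indices) computes the genuine
composition `∑_{i,n} (coeff of x^i t^n in U) · Y(t,x)^i · t^n`. -/
def substX (U : MvPowerSeries (Fin 2) ℚ) (Y : PowerSeries (LaurentPolynomial ℚ)) :
    PowerSeries (LaurentPolynomial ℚ) :=
  PowerSeries.mk fun m =>
    ∑ n ∈ Finset.range (m + 1), ∑ i ∈ Finset.range (m + 1),
      MvPowerSeries.coeff (Finsupp.single 0 i + Finsupp.single 1 n) U •
        PowerSeries.coeff (m - n) (Y ^ i)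

/-- The statement that `U ∈ ℚ[[x,t]]` satisfies the functional equation
`U(t,x) = A(t,x) + B(t,x) · U(t, Y(t,x))`, expressed by comparing, for every
`m ∈ ℕ` and `k ∈ ℤ`, the coefficients of `x^k t^m` of the two sides (the
coefficient of `x^k t^m` of `U` being `0` for `k < 0`). -/
def IsCompSolution (A B Y : PowerSeries (LaurentPolynomial ℚ))
    (U : MvPowerSeries (Fin 2) ℚ) : Prop :=
  ∀ (m : ℕ) (k : ℤ),
    (if 0 ≤ k then
        MvPowerSeries.coeff (Finsupp.single 0 k.toNat + Finsupp.single 1 m) U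
      else 0)
      = (AddMonoidAlgebra.coeff (PowerSeries.coeff m (A + B * substX U Y))) k

/-- Lemma 1: if `A, B, Y ∈ ℚ[x,x⁻¹][[t]]` with `ord_t B > 0` and `ord_t Y > 0`,
then there is at most one power series `U ∈ ℚ[[x,t]]` with
`U(t,x) = A(t,x) + B(t,x)·U(t,Y(t,x))`. -/
theorem at_most_one_solution (A B Y : PowerSeries (LaurentPolynomial ℚ))
    (hB : PowerSeries.constantCoeff B = 0)
    (hY : PowerSeries.constantCoeff Y = 0)
    (U₁ U₂ : MvPowerSeries (Fin 2) ℚ)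
    (h₁ : IsCompSolution A B Y U₁) (h₂ : IsCompSolution A B Y U₂) :
    U₁ = U₂ := by
  have key : ∀ m : ℕ, ∀ i : ℕ,
      MvPowerSeries.coeff (Finsupp.single 0 i + Finsupp.single 1 m) U₁ =
      MvPowerSeries.coeff (Finsupp.single 0 i + Finsupp.single 1 m) U₂ := by
    intro m
    induction m using Nat.strong_induction_on with
    | _ m ih =>
      have hsub : ∀ m' < m, PowerSeries.coeff m' (substX U₁ Y)
          = PowerSeries.coeff m' (substX U₂ Y) := by
        intro m' hm'
        simp only [substX, PowerSeries.coeff_mk]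
        refine Finset.sum_congr rfl fun n hn => Finset.sum_congr rfl fun i hi => ?_
        rw [ih n (lt_of_le_of_lt (Nat.lt_succ_iff.mp (Finset.mem_range.mp hn)) hm') i]
      have hmul : PowerSeries.coeff m (B * substX U₁ Y)
          = PowerSeries.coeff m (B * substX U₂ Y) := by
        rw [PowerSeries.coeff_mul, PowerSeries.coeff_mul]
        refine Finset.sum_congr rfl fun p hp => ?_
        rcases Nat.eq_zero_or_pos p.1 with h0 | hpos
        · have hB0 : PowerSeries.coeff p.1 B = 0 := by
            rw [h0]
            simpa [PowerSeries.coeff_zero_eq_constantCoeff] using hB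
          rw [hB0, zero_mul, zero_mul]
        · have hlt : p.2 < m := by
            have := Finset.HasAntidiagonal.mem_antidiagonal.mp hp
            omega
          rw [hsub p.2 hlt]
      intro i
      have e1 := h₁ m (i : ℤ)
      have e2 := h₂ m (i : ℤ)
      rw [if_pos (Int.natCast_nonneg i)] at e1 e2
      simp only [Int.toNat_natCast] at e1 e2
      have hrhs : PowerSeries.coeff m (A + B * substX U₁ Y)
          = PowerSeries.coeff m (A + B * substX U₂ Y) := by
        rw [map_add, map_add, hmul]
      rw [e1, e2, hrhs]
  ext d
  have hd : d = Finsupp.single 0 (d 0) + Finsupp.single 1 (d 1) := by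
    ext j
    fin_cases j <;> simp [Finsupp.single_apply]
  rw [hd]
  exact key (d 1) (d 0)
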